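/- Let d ≥ 3, let C > 0, s ∈ (0,2), r₀ > 0, and let v : (0,∞) → ℝ be continuous with v(r) ≥ -C·r^{-s} for all r ∈ (0, r₀]. Set V(x) = v(‖x‖). Then there exist constants c_d > 0 and λ₀ > 0 such that for every λ ≥ λ₀ and every nonzero twice continuously differentiable u : ℝ^d → ℝ with u and ‖∇u‖ square integrable on ℝ^d and -Δu(x) + V(x)·u(x) = λ·u(x) for all x ≠ 0, no connected component of {x ∈ ℝ^d : u(x) ≠ 0} is contained in the open ball B(0, c_d·λ^{-1/2}). -/

import Mathlib

open MeasureTheory Filter Topology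

/-- The Euclidean euclLaplacian `Δu = Σᵢ ∂²u/∂xᵢ²`. -/
noncomputable def euclLaplacian {d : ℕ} (u : EuclideanSpace ℝ (Fin d) → ℝ)
    (x : EuclideanSpace ℝ (Fin d)) : ℝ :=
  ∑ i : Fin d, fderiv ℝ (fun y => fderiv ℝ u y (EuclideanSpace.single i 1)) x
      (EuclideanSpace.single i 1)

section Helpers


lemma second_deriv_nonpos_of_isLocalMax {φ ψ : ℝ → ℝ} {a : ℝ}
    (hmax : IsLocalMax φ 0)
    (hd1 : ∀ᶠ t in 𝓝 (0:ℝ), HasDerivAt φ (ψ t) t)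
    (hd2 : HasDerivAt ψ a 0) : a ≤ 0 := by
  by_contra h
  push_neg at h
  have hψ0 : ψ 0 = 0 := by
    have h1 : deriv φ 0 = ψ 0 := (hd1.self_of_nhds).deriv
    have h2 := hmax.deriv_eq_zero
    rw [h1] at h2; exact h2
  have hslope : Tendsto (slope ψ 0) (𝓝[≠] 0) (𝓝 a) :=
    hasDerivAt_iff_tendsto_slope.mp hd2
  have hev : ∀ᶠ t in 𝓝[>] (0:ℝ), 0 < ψ t := by
    have h1 : ∀ᶠ t in 𝓝[≠] (0:ℝ), 0 < slope ψ 0 t :=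
      hslope.eventually (eventually_gt_nhds h)
    have h2 : ∀ᶠ t in 𝓝[>] (0:ℝ), 0 < slope ψ 0 t :=
      h1.filter_mono (nhdsWithin_mono 0 (fun t ht => ne_of_gt ht))
    filter_upwards [h2, self_mem_nhdsWithin] with t ht ht'
    have hs : slope ψ 0 t = ψ t / t := by simp [slope_def_field, hψ0]
    rw [hs] at ht
    have := mul_pos ht (show (0:ℝ) < t from ht')
    rwa [div_mul_cancel₀ _ (ne_of_gt ht')] at this
  obtain ⟨δ₁, hδ₁, H1⟩ := Metric.eventually_nhds_iff.mp (hd1.and hmax)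
  obtain ⟨δ₂, hδ₂, H2⟩ := mem_nhdsGT_iff_exists_Ioo_subset.mp hev
  set t0 : ℝ := min δ₁ δ₂ / 2 with ht0
  have ht0pos : 0 < t0 := by
    have h1 : (0:ℝ) < δ₁ := hδ₁
    have h2 : (0:ℝ) < δ₂ := hδ₂
    simp only [ht0]
    have : 0 < min δ₁ δ₂ := lt_min h1 h2
    linarith
  have ht0δ₁ : t0 < δ₁ := by
    have : min δ₁ δ₂ ≤ δ₁ := min_le_left _ _
    simp only [ht0]; linarith
  have ht0δ₂ : t0 < δ₂ := by
    have : min δ₁ δ₂ ≤ δ₂ := min_le_right _ _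
    have hδ₂' : 0 < δ₂ := hδ₂
    simp only [ht0]; linarith
  have hderiv : ∀ t ∈ Set.Icc (0:ℝ) t0, HasDerivAt φ (ψ t) t := by
    intro t ht
    refine (H1 (y := t) ?_).1
    rw [Real.dist_eq, sub_zero, abs_of_nonneg ht.1]
    linarith [ht.2]
  have hmono : StrictMonoOn φ (Set.Icc 0 t0) := by
    refine strictMonoOn_of_deriv_pos (convex_Icc 0 t0)
      (fun t ht => (hderiv t ht).continuousAt.continuousWithinAt) ?_
    intro t ht
    rw [interior_Icc] at ht
    rw [(hderiv t ⟨le_of_lt ht.1, le_of_lt ht.2⟩).deriv]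
    exact H2 ⟨ht.1, lt_trans ht.2 ht0δ₂⟩
  have h1 : φ 0 < φ t0 :=
    hmono ⟨le_refl 0, le_of_lt ht0pos⟩ ⟨le_of_lt ht0pos, le_refl t0⟩ ht0pos
  have h2 : φ t0 ≤ φ 0 := by
    refine (H1 (y := t0) ?_).2
    rw [Real.dist_eq, sub_zero, abs_of_pos ht0pos]; exact ht0δ₁
  linarith

variable {d : ℕ}
local notation "E" => EuclideanSpace ℝ (Fin d)




noncomputable def nsq (z : E) : ℝ := ∑ j, z j ^ 2

noncomputable def nsqD (z : E) : E →L[ℝ] ℝ :=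
  ∑ j, (2 * z j) • EuclideanSpace.proj j

lemma hasFDerivAt_nsq (z : E) : HasFDerivAt nsq (nsqD z) z := by
  have h : ∀ j : Fin d, HasFDerivAt (fun y : E => y j ^ 2)
      ((2 * z j) • (EuclideanSpace.proj j : E →L[ℝ] ℝ)) z := by
    intro j
    have h := ((EuclideanSpace.proj (𝕜 := ℝ) j).hasFDerivAt (x := z)).fun_mul
      ((EuclideanSpace.proj (𝕜 := ℝ) j).hasFDerivAt (x := z))
    simpa [pow_two, two_mul, add_smul] using h
  exact HasFDerivAt.fun_sum (fun j (_ : j ∈ Finset.univ) => h j)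

lemma nsqD_apply (z : E) (i : Fin d) :
    nsqD z (EuclideanSpace.single i (1:ℝ)) = 2 * z i := by
  simp [nsqD, ContinuousLinearMap.sum_apply, EuclideanSpace.single_apply]

lemma nsq_eq_norm (z : E) : nsq z = ‖z‖ ^ 2 := by
  rw [EuclideanSpace.norm_eq, Real.sq_sqrt (by positivity)]
  simp [nsq, _root_.sq_abs]

lemma nsq_pos {z : E} (hz : z ≠ 0) : 0 < nsq z := by
  rw [nsq_eq_norm]
  have : 0 < ‖z‖ := norm_pos_iff.mpr hz
  positivity

lemma nsq_nonneg (z : E) : 0 ≤ nsq z := by rw [nsq_eq_norm]; positivity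

lemma continuous_nsq : Continuous (nsq : E → ℝ) := by
  have h : Differentiable ℝ (nsq : E → ℝ) := fun z => (hasFDerivAt_nsq z).differentiableAt
  exact h.continuous




lemma hasDerivAt_line {F : E → ℝ} {G : E →L[ℝ] ℝ} {x h : E} {t : ℝ}
    (hF : HasFDerivAt F G (x + t • h)) :
    HasDerivAt (fun s : ℝ => F (x + s • h)) (G h) t := by
  have hline : HasDerivAt (fun s : ℝ => x + s • h) h t := by
    simpa using ((hasDerivAt_id t).smul_const h).const_add x
  exact hF.comp_hasDerivAt t hline

lemma second_term_nonpos {w : E → ℝ} {Dw : E → (E →L[ℝ] ℝ)} {y : E}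
    (hev : ∀ᶠ z in 𝓝 y, HasFDerivAt w (Dw z) z)
    {i : Fin d} {F : E → ℝ}
    (hFval : ∀ᶠ z in 𝓝 y, Dw z (EuclideanSpace.single i (1:ℝ)) = F z)
    {G : E →L[ℝ] ℝ} (hG : HasFDerivAt F G y)
    (hmax : IsLocalMax w y) :
    G (EuclideanSpace.single i (1:ℝ)) ≤ 0 := by
  set e : E := EuclideanSpace.single i (1:ℝ) with he
  have hline : Continuous (fun t : ℝ => y + t • e) := by continuity
  have hℓ : Filter.Tendsto (fun t : ℝ => y + t • e) (𝓝 0) (𝓝 y) := by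
    have := hline.tendsto 0
    simpa using this
  refine second_deriv_nonpos_of_isLocalMax (φ := fun t => w (y + t • e))
    (ψ := fun t => F (y + t • e)) ?_ ?_ ?_
  · -- IsLocalMax
    have := hℓ.eventually hmax
    simpa [IsLocalMax, IsMaxFilter] using this
  · filter_upwards [hℓ.eventually (hev.and hFval)] with t ht
    have h1 : HasDerivAt (fun s : ℝ => w (y + s • e)) (Dw (y + t • e) e) t :=
      hasDerivAt_line ht.1
    rwa [ht.2] at h1
  · have : HasFDerivAt F G (y + (0:ℝ) • e) := by simpa using hG
    simpa using hasDerivAt_line (t := 0) this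

end Helpers

section Aux

variable {d : ℕ}

local notation "E" => EuclideanSpace ℝ (Fin d)

set_option maxHeartbeats 1000000 in
lemma aux_main (hd : 3 ≤ d) {σ lam R C : ℝ}
    (hσ1 : 3/2 ≤ σ) (hσ2 : σ < 2) (hC : 0 < C) (hlam : 0 < lam)
    (hR : 0 < R) (hR1 : R ≤ 1)
    {W : E → ℝ} (hW : ∀ x : E, x ≠ 0 → ‖x‖ ≤ R → -C * ‖x‖ ^ (-σ) ≤ W x)
    {u : E → ℝ} (hu : ContDiff ℝ 2 u)
    (heq : ∀ x : E, x ≠ 0 → euclLaplacian u x = (W x - lam) * u x)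
    {Ω : Set E} (hopen : IsOpen Ω) (hne : Ω.Nonempty)
    (hpos : ∀ y ∈ Ω, 0 < u y)
    (hbd : ∀ y ∈ closure Ω, y ∉ Ω → u y = 0)
    (hsub : ∀ y ∈ closure Ω, ‖y‖ ≤ R) :
    1 ≤ lam * R ^ 2 / d + C / ((2 - σ) * (d - σ)) * (R ^ 2) ^ ((2 - σ)/2) := by
  -- basic constants
  set β : ℝ := (2 - σ)/2 with hβ
  have hβpos : 0 < β := by rw [hβ]; linarith
  have hβle : β ≤ 1/4 := by rw [hβ]; linarith
  have hd3 : (3:ℝ) ≤ (d:ℝ) := by exact_mod_cast hd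
  have hdpos : (0:ℝ) < d := by linarith
  have hdσ : 0 < (d:ℝ) - σ := by linarith
  set K : ℝ := (2 - σ) * ((d:ℝ) - σ) with hKdef
  have hK : 0 < K := by apply mul_pos <;> linarith
  -- compactness of the closure
  have hclsub : closure Ω ⊆ Metric.closedBall 0 R := by
    intro y hy
    rw [Metric.mem_closedBall, dist_zero_right]
    exact hsub y hy
  have hcl : IsCompact (closure Ω) :=
    (isCompact_closedBall (0:E) R).of_isClosed_subset isClosed_closure hclsub
  have hclne : (closure Ω).Nonempty := hne.mono subset_closure
  -- max of u
  obtain ⟨p, hpmem, hpmax⟩ := hcl.exists_isMaxOn hclne hu.continuous.continuousOn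
  set M : ℝ := u p with hMdef
  have hMub : ∀ z ∈ closure Ω, u z ≤ M := fun z hz => hpmax hz
  obtain ⟨x₀, hx₀⟩ := hne
  have hM : 0 < M := lt_of_lt_of_le (hpos x₀ hx₀) (hMub x₀ (subset_closure hx₀))
  -- barrier
  set A : ℝ := lam * M / d with hAdef
  set B : ℝ := C * M / K with hBdef
  have hA : 0 < A := by apply div_pos (mul_pos hlam hM) hdpos
  have hB : 0 < B := div_pos (mul_pos hC hM) hK
  set w : E → ℝ := fun z => u z + (A * nsq z + B * nsq z ^ β) with hwdef
  have hwcont : Continuous w := by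
    have hnsq : Continuous (nsq : E → ℝ) := continuous_nsq
    have hr : Continuous (fun z : E => nsq z ^ β) :=
      hnsq.rpow_const (fun z => Or.inr (le_of_lt hβpos))
    exact hu.continuous.add ((continuous_const.mul hnsq).add (continuous_const.mul hr))
  obtain ⟨y, hymem, hymax⟩ := hcl.exists_isMaxOn hclne hwcont.continuousOn
  have hwy : M ≤ w y := by
    have h1 : w p ≤ w y := hymax hpmem
    have h2 : M ≤ w p := by
      have := nsq_nonneg p
      have h3 : 0 ≤ nsq p ^ β := Real.rpow_nonneg (nsq_nonneg p) β
      simp only [hwdef]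
      nlinarith
    linarith
  by_cases hyΩ : y ∈ Ω
  · -- interior max: contradiction
    exfalso
    have hmaxloc : IsLocalMax w y := by
      filter_upwards [hopen.mem_nhds hyΩ] with z hz
      exact hymax (subset_closure hz)
    by_cases hy0 : y = 0
    · -- max at the origin: impossible by the rpow growth of the barrier
      subst hy0
      obtain ⟨z₀, hz₀mem, hz₀max⟩ := (isCompact_closedBall (0:E) 1).exists_isMaxOn
        ⟨0, Metric.mem_closedBall_self zero_le_one⟩
        ((hu.continuous_fderiv (by norm_num)).norm.continuousOn)
      set L : ℝ := ‖fderiv ℝ u z₀‖ with hLdef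
      have hL0 : 0 ≤ L := norm_nonneg _
      have hlip : ∀ z ∈ Metric.closedBall (0:E) 1, ‖u z - u 0‖ ≤ L * ‖z - 0‖ := by
        intro z hz
        exact Convex.norm_image_sub_le_of_norm_fderiv_le
          (fun x _ => (hu.differentiable (by norm_num)).differentiableAt)
          (fun x hx => hz₀max hx) (convex_closedBall 0 1)
          (Metric.mem_closedBall_self zero_le_one) hz
      have hd0 : 0 < d := by omega
      set i0 : Fin d := ⟨0, hd0⟩ with hi0
      set e0 : E := EuclideanSpace.single i0 (1:ℝ) with he0
      have he0norm : ‖e0‖ = 1 := by rw [he0, EuclideanSpace.norm_single]; norm_num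
      have htend : Tendsto (fun t : ℝ => t • e0) (𝓝 0) (𝓝 (0:E)) := by
        have hcont : Continuous fun t : ℝ => t • e0 := by continuity
        simpa using hcont.tendsto 0
      have hevΩ : ∀ᶠ t : ℝ in 𝓝[>] 0, t • e0 ∈ Ω :=
        (htend.eventually (hopen.mem_nhds hyΩ)).filter_mono nhdsWithin_le_nhds
      have hrtend : Tendsto (fun t : ℝ => L * t ^ (1 - 2*β)) (𝓝[>] 0) (𝓝 0) := by
        have h1 : ContinuousAt (fun t : ℝ => t ^ (1-2*β)) 0 :=
          Real.continuousAt_rpow_const 0 _ (Or.inr (by linarith))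
        have h2 : Tendsto (fun t : ℝ => t ^ (1-2*β)) (𝓝 0) (𝓝 0) := by
          have := h1.tendsto
          rwa [Real.zero_rpow (by linarith : (1:ℝ)-2*β ≠ 0)] at this
        have h3 : Tendsto (fun t : ℝ => L * t ^ (1-2*β)) (𝓝[>] 0) (𝓝 (L * 0)) :=
          (h2.const_mul L).mono_left (nhdsWithin_le_nhds (s := Set.Ioi (0:ℝ)))
        rwa [mul_zero] at h3
      have hevB : ∀ᶠ t : ℝ in 𝓝[>] 0, L * t ^ (1-2*β) < B :=
        hrtend.eventually (eventually_lt_nhds hB)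
      have hev1 : ∀ᶠ t : ℝ in 𝓝[>] 0, t < 1 := by
        have : Tendsto (fun t : ℝ => t) (𝓝[>] 0) (𝓝 0) :=
          tendsto_id.mono_left nhdsWithin_le_nhds
        exact this.eventually (eventually_lt_nhds one_pos)
      obtain ⟨t, htall⟩ := (hevΩ.and (hevB.and (hev1.and self_mem_nhdsWithin))).exists
      obtain ⟨htΩ, htB, ht1, htpos⟩ := htall
      have htpos' : (0:ℝ) < t := htpos
      set z : E := t • e0 with hzdef
      have hznorm : ‖z‖ = t := by
        rw [hzdef, norm_smul, he0norm, Real.norm_eq_abs, abs_of_pos htpos', mul_one]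
      have hz1 : z ∈ Metric.closedBall (0:E) 1 := by
        rw [Metric.mem_closedBall, dist_zero_right, hznorm]; linarith
      have hu0z : u 0 - u z ≤ L * t := by
        have h := hlip z hz1
        rw [sub_zero, hznorm, Real.norm_eq_abs] at h
        have := abs_le.mp h
        linarith [this.1]
      have hnsqz : nsq z = t ^ 2 := by rw [nsq_eq_norm, hznorm]
      have hnsq0 : nsq (0:E) = 0 := by rw [nsq_eq_norm]; simp
      have hw0 : w 0 = u 0 := by
        simp only [hwdef, hnsq0, Real.zero_rpow (ne_of_gt hβpos)]
        ring
      have hwz : w z ≤ w 0 := hymax (subset_closure htΩ)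
      have ht2β : (0:ℝ) < t ^ (2*β) := Real.rpow_pos_of_pos htpos' _
      have hsplit : t ^ ((1:ℝ)-2*β) * t^(2*β) = t := by
        rw [← Real.rpow_add htpos']
        norm_num
      have hLt : L * t < B * t ^ (2*β) := by
        calc L * t = L * t ^ ((1:ℝ)-2*β) * t^(2*β) := by rw [mul_assoc, hsplit]
        _ < B * t ^ (2*β) := mul_lt_mul_of_pos_right htB ht2β
      have hpow : (t^2 : ℝ) ^ β = t ^ (2*β) := by
        rw [← Real.rpow_natCast t 2, ← Real.rpow_mul (le_of_lt htpos')]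
        norm_num
      have hwzval : w z = u z + A * t^2 + B * t^(2*β) := by
        simp only [hwdef, hnsqz, hpow]; ring
      have hApos : 0 < A * t^2 := by positivity
      linarith [hwz, hw0, hu0z, hLt, hwzval, hApos]
    · -- max away from origin: second derivative test vs. the PDE
      have hudiff : Differentiable ℝ u := hu.differentiable (by norm_num)
      have hydne : ∀ᶠ z in 𝓝 y, z ≠ (0:E) := eventually_ne_nhds hy0
      set Dw : E → (E →L[ℝ] ℝ) := fun z =>
        fderiv ℝ u z + (A • nsqD z + B • ((β * nsq z ^ (β-1)) • nsqD z)) with hDw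
      have hev : ∀ᶠ z in 𝓝 y, HasFDerivAt w (Dw z) z := by
        filter_upwards [hydne] with z hz
        have h1 : HasFDerivAt u (fderiv ℝ u z) z := (hudiff z).hasFDerivAt
        have h2 : HasFDerivAt (fun z' : E => A * nsq z') (A • nsqD z) z :=
          (hasFDerivAt_nsq z).const_mul A
        have h3 : HasFDerivAt (fun z' : E => nsq z' ^ β) ((β * nsq z ^ (β-1)) • nsqD z) z :=
          (hasFDerivAt_nsq z).rpow_const (Or.inl (ne_of_gt (nsq_pos hz)))
        exact h1.add (h2.add (h3.const_mul B))
      set c₀ : ℝ := 2 * A + 2 * B * β * nsq y ^ (β-1) with hc₀def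
      set c₁ : ℝ := 4 * B * β * (β-1) * nsq y ^ (β-1-1) with hc₁def
      have hterm : ∀ i : Fin d,
          fderiv ℝ (fun z => fderiv ℝ u z (EuclideanSpace.single i (1:ℝ))) y
              (EuclideanSpace.single i (1:ℝ)) + (c₀ + c₁ * (y i)^2) ≤ 0 := by
        intro i
        set F : E → ℝ := fun z => fderiv ℝ u z (EuclideanSpace.single i (1:ℝ))
              + (A * (2 * z i) + B * ((β * nsq z ^ (β-1)) * (2 * z i))) with hF
        have hFval : ∀ᶠ z in 𝓝 y, Dw z (EuclideanSpace.single i (1:ℝ)) = F z := by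
          refine Filter.Eventually.of_forall (fun z => ?_)
          simp only [hDw, hF, ContinuousLinearMap.add_apply, ContinuousLinearMap.coe_smul',
            Pi.smul_apply, nsqD_apply, smul_eq_mul]
          try ring
        have hu1 : DifferentiableAt ℝ
            (fun z : E => fderiv ℝ u z (EuclideanSpace.single i (1:ℝ))) y := by
          have h5 : ContDiff ℝ 1 (fderiv ℝ u) := hu.fderiv_right (by norm_num)
          exact (h5.differentiable (by norm_num) y).clm_apply (differentiableAt_const _)
        have hp1 : HasFDerivAt (fun z : E => fderiv ℝ u z (EuclideanSpace.single i (1:ℝ)))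
            (fderiv ℝ (fun z : E => fderiv ℝ u z (EuclideanSpace.single i (1:ℝ))) y) y :=
          hu1.hasFDerivAt
        have hm1 : HasFDerivAt (fun z : E => nsq z ^ (β-1))
            (((β-1) * nsq y ^ (β-1-1)) • nsqD y) y :=
          (hasFDerivAt_nsq y).rpow_const (Or.inl (ne_of_gt (nsq_pos hy0)))
        have hm2 := hm1.const_mul β
        have hm3 : HasFDerivAt (fun z : E => (2:ℝ) * z i)
            ((2:ℝ) • (EuclideanSpace.proj i : E →L[ℝ] ℝ)) y :=
          ((EuclideanSpace.proj (𝕜 := ℝ) i).hasFDerivAt).const_mul 2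
        have hm4 := hm2.mul hm3
        have hm5 := hm4.const_mul B
        have hp2 := hm3.const_mul A
        have hG := hp1.add (hp2.add hm5)
        have hkey := second_term_nonpos hev hFval hG hmaxloc
        have hproj : (EuclideanSpace.proj (𝕜 := ℝ) i) (EuclideanSpace.single i (1:ℝ)) = 1 := by
          simp [EuclideanSpace.single_apply]
        simp only [ContinuousLinearMap.add_apply, ContinuousLinearMap.coe_smul', Pi.smul_apply,
          nsqD_apply, smul_eq_mul, hproj] at hkey
        calc fderiv ℝ (fun z => fderiv ℝ u z (EuclideanSpace.single i (1:ℝ))) y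
              (EuclideanSpace.single i (1:ℝ)) + (c₀ + c₁ * (y i)^2)
            = fderiv ℝ (fun z : E => fderiv ℝ u z (EuclideanSpace.single i (1:ℝ))) y
              (EuclideanSpace.single i (1:ℝ))
              + (A * (2 * 1) + B * ((β * nsq y ^ (β-1)) * (2 * 1)
                + 2 * y i * (β * ((β-1) * nsq y ^ (β-1-1) * (2 * y i))))) := by
              rw [hc₀def, hc₁def]; ring
          _ ≤ 0 := hkey
      have hny : 0 < nsq y := nsq_pos hy0
      have hnormy : 0 < ‖y‖ := norm_pos_iff.mpr hy0
      have hsum : euclLaplacian u y + ((d:ℝ) * c₀ + c₁ * nsq y) ≤ 0 := by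
        have h := Finset.sum_le_sum (fun i (_ : i ∈ Finset.univ) => hterm i)
        rw [Finset.sum_add_distrib, Finset.sum_add_distrib, Finset.sum_const,
          Finset.card_univ, Fintype.card_fin, ← Finset.mul_sum] at h
        simp only [Finset.sum_const_zero, nsmul_eq_mul] at h
        have hnsqy : ∑ i : Fin d, (y i)^2 = nsq y := rfl
        calc euclLaplacian u y + ((d:ℝ) * c₀ + c₁ * nsq y)
            = (∑ i : Fin d, fderiv ℝ (fun z => fderiv ℝ u z (EuclideanSpace.single i (1:ℝ))) y
              (EuclideanSpace.single i (1:ℝ))) + ((d:ℝ) * c₀ + c₁ * ∑ i : Fin d, (y i)^2) := by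
              rw [hnsqy]; rfl
          _ ≤ 0 := by linarith [h]
      have hlap : euclLaplacian u y = (W y - lam) * u y := heq y hy0
      have hry : nsq y ^ (β-1-1) * nsq y = nsq y ^ (β-1) := by
        nth_rewrite 2 [show nsq y = nsq y ^ (1:ℝ) from (Real.rpow_one _).symm]
        rw [← Real.rpow_add hny]
        ring_nf
      have e1 : (d:ℝ) * A = lam * M := by
        rw [hAdef]; field_simp
      have e2 : B * K = C * M := by
        rw [hBdef]; field_simp
      have e3 : nsq y ^ (β-1) = ‖y‖ ^ (-σ) := by
        rw [nsq_eq_norm, ← Real.rpow_natCast ‖y‖ 2, ← Real.rpow_mul (norm_nonneg y)]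
        congr 1
        push_cast
        rw [hβ]; ring
      have hbar : (d:ℝ) * c₀ + c₁ * nsq y = 2*(lam*M) + C*M*‖y‖^(-σ) := by
        have hKβ : 2*(d:ℝ)*β + 4*β*(β-1) = K := by rw [hβ, hKdef]; ring
        calc (d:ℝ) * c₀ + c₁ * nsq y
            = 2*((d:ℝ)*A) + B * nsq y ^ (β-1) * (2*(d:ℝ)*β)
              + 4*B*β*(β-1)*(nsq y ^ (β-1-1) * nsq y) := by
              rw [hc₀def, hc₁def]; ring
          _ = 2*(lam*M) + B * K * (nsq y ^ (β-1)) := by rw [hry, e1, ← hKβ]; ring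
          _ = 2*(lam*M) + C*M*‖y‖^(-σ) := by rw [e2, e3]
      have hρpos : 0 < ‖y‖^(-σ) := Real.rpow_pos_of_pos hnormy _
      have huy : 0 < u y := hpos y hyΩ
      have huyM : u y ≤ M := hMub y (subset_closure hyΩ)
      have hsum' : (W y - lam) * u y + (2*(lam*M) + C*M*‖y‖^(-σ)) ≤ 0 := by
        rw [← hbar, ← hlap]; exact hsum
      rcases le_or_gt lam (W y) with hWy | hWy
      · nlinarith [mul_nonneg (sub_nonneg.mpr hWy) (le_of_lt huy),
          mul_pos hlam hM, mul_pos (mul_pos hC hM) hρpos]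
      · have h2 : -C * ‖y‖^(-σ) ≤ W y := hW y hy0 (hsub y (subset_closure hyΩ))
        have h3 : (W y - lam) * M ≤ (W y - lam) * u y := by nlinarith
        nlinarith [mul_pos hlam hM, mul_nonneg (mul_nonneg (le_of_lt hC) (le_of_lt hM)) (le_of_lt hρpos)]
  · -- max on the boundary: the quantitative inequality
    have huy : u y = 0 := hbd y hymem hyΩ
    have h1 : nsq y ≤ R ^ 2 := by
      rw [nsq_eq_norm]
      exact pow_le_pow_left₀ (norm_nonneg y) (hsub y hymem) 2
    have h2 : nsq y ^ β ≤ (R ^ 2) ^ β :=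
      Real.rpow_le_rpow (nsq_nonneg y) h1 (le_of_lt hβpos)
    have h3 : w y ≤ A * R ^ 2 + B * (R ^ 2) ^ β := by
      simp only [hwdef, huy]
      nlinarith
    have h4 : M ≤ M * (lam * R ^ 2 / d + C / K * (R ^ 2) ^ β) := by
      have : A * R ^ 2 + B * (R ^ 2) ^ β = M * (lam * R ^ 2 / d + C / K * (R ^ 2) ^ β) := by
        simp only [hAdef, hBdef]; ring
      linarith [hwy, h3]
    have h5 : 1 ≤ lam * R ^ 2 / d + C / K * (R ^ 2) ^ β := by
      nlinarith
    exact h5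

end Aux

section Main

variable {d : ℕ}

local notation "E" => EuclideanSpace ℝ (Fin d)

lemma euclLaplacian_neg (u : E → ℝ) (x : E) :
    euclLaplacian (fun z => -u z) x = -euclLaplacian u x := by
  unfold euclLaplacian
  rw [← Finset.sum_neg_distrib]
  apply Finset.sum_congr rfl
  intro i _
  have h1 : (fun z : E => fderiv ℝ (fun z' => -u z') z (EuclideanSpace.single i (1:ℝ)))
      = fun z : E => -(fderiv ℝ u z (EuclideanSpace.single i (1:ℝ))) := by
    ext z
    rw [fderiv_fun_neg]
    simp
  rw [h1, fderiv_fun_neg]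
  simp

end Main

/-- Proposition 3.5, case `d ≥ 3`: for `λ` large, no nodal domain of an eigenfunction
with eigenvalue `λ` is contained in the ball `B(0, c_d λ^{-1/2})`. -/
theorem stmt2 (d : ℕ) (hd : 3 ≤ d) (C s r₀ : ℝ) (hC : 0 < C)
    (hs : s ∈ Set.Ioo (0 : ℝ) 2) (hr₀ : 0 < r₀)
    (v : ℝ → ℝ) (hv : ContinuousOn v (Set.Ioi 0))
    (hvlow : ∀ r ∈ Set.Ioc (0 : ℝ) r₀, v r ≥ -C * r ^ (-s)) :
    ∃ cd > (0 : ℝ), ∃ lam₀ > (0 : ℝ), ∀ lam ≥ lam₀,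
      ∀ u : EuclideanSpace ℝ (Fin d) → ℝ, u ≠ 0 → ContDiff ℝ 2 u →
        MemLp u 2 volume → MemLp (fun x => ‖gradient u x‖) 2 volume →
        (∀ x : EuclideanSpace ℝ (Fin d), x ≠ 0 →
          -euclLaplacian u x + v ‖x‖ * u x = lam * u x) →
        ∀ Ω : Set (EuclideanSpace ℝ (Fin d)),
          (∃ x ∈ {y | u y ≠ 0}, Ω = connectedComponentIn {y | u y ≠ 0} x) →
          ¬ Ω ⊆ Metric.ball (0 : EuclideanSpace ℝ (Fin d)) (cd * lam ^ (-(1 : ℝ)/2)) := by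
  obtain ⟨hs0, hs2⟩ := hs
  set σ : ℝ := max s (3/2) with hσdef
  have hσ1 : 3/2 ≤ σ := le_max_right _ _
  have hσ2 : σ < 2 := max_lt hs2 (by norm_num)
  have hd3 : (3:ℝ) ≤ (d:ℝ) := by exact_mod_cast hd
  set K : ℝ := (2 - σ) * ((d:ℝ) - σ) with hKdef
  have hKpos : 0 < K := mul_pos (by linarith) (by linarith)
  set C₁ : ℝ := C / K with hC₁
  have hC₁pos : 0 < C₁ := div_pos hC hKpos
  set m : ℝ := min r₀ 1 with hm
  have hmpos : 0 < m := lt_min hr₀ one_pos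
  set lam₀ : ℝ := max (m⁻¹ ^ 2) ((max 1 (2*C₁)) ^ ((2:ℝ)/(2-σ))) with hlam₀
  have hlam₀pos : 0 < lam₀ :=
    lt_of_lt_of_le (pow_pos (inv_pos.mpr hmpos) 2) (le_max_left _ _)
  refine ⟨1, one_pos, lam₀, hlam₀pos, ?_⟩
  intro lam hlam u hune hu _ _ hpde Ω hΩ hsubball
  obtain ⟨x, hx, hΩeq⟩ := hΩ
  have hlampos : 0 < lam := lt_of_lt_of_le hlam₀pos hlam
  set S : Set (EuclideanSpace ℝ (Fin d)) := {y | u y ≠ 0} with hSdef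
  have hScont : Continuous u := hu.continuous
  have hSopen : IsOpen S := by
    have : S = u ⁻¹' ({0}ᶜ) := rfl
    rw [this]
    exact (isOpen_compl_singleton).preimage hScont
  have hΩopen : IsOpen Ω := hΩeq ▸ hSopen.connectedComponentIn
  have hxΩ : x ∈ Ω := hΩeq ▸ mem_connectedComponentIn hx
  have hΩsubS : Ω ⊆ S := hΩeq ▸ connectedComponentIn_subset S x
  have hΩconn : IsPreconnected Ω := hΩeq ▸ isPreconnected_connectedComponentIn
  have hΩne : Ω.Nonempty := ⟨x, hxΩ⟩
  have hbd : ∀ y ∈ closure Ω, y ∉ Ω → u y = 0 := by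
    intro y hy hyΩ
    by_contra huy
    have hyS : y ∈ S := huy
    have hopen' : connectedComponentIn S y ∈ 𝓝 y :=
      (hSopen.connectedComponentIn).mem_nhds (mem_connectedComponentIn hyS)
    obtain ⟨z, hz1, hz2⟩ := mem_closure_iff_nhds.mp hy _ hopen'
    have e1 : connectedComponentIn S y = connectedComponentIn S z := connectedComponentIn_eq hz1
    have e2 : connectedComponentIn S x = connectedComponentIn S z :=
      connectedComponentIn_eq (hΩeq ▸ hz2)
    have : y ∈ Ω := by
      rw [hΩeq, e2, ← e1]
      exact mem_connectedComponentIn hyS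
    exact hyΩ this
  set R : ℝ := lam ^ (-(1:ℝ)/2) with hRdef
  have hRpos : 0 < R := Real.rpow_pos_of_pos hlampos _
  have hRinv : R = (lam ^ ((1:ℝ)/2))⁻¹ := by
    rw [hRdef, neg_div, Real.rpow_neg (le_of_lt hlampos)]
  have hRle : R ≤ m := by
    have h1 : m⁻¹ ^ 2 ≤ lam := le_trans (le_max_left _ _) hlam
    have h2 : m⁻¹ ≤ lam ^ ((1:ℝ)/2) := by
      have h3 : (m⁻¹ ^ 2 : ℝ) ^ ((1:ℝ)/2) ≤ lam ^ ((1:ℝ)/2) :=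
        Real.rpow_le_rpow (by positivity) h1 (by norm_num)
      rwa [← Real.rpow_natCast m⁻¹ 2, ← Real.rpow_mul (by positivity),
        (by norm_num : ((2:ℕ):ℝ) * ((1:ℝ)/2) = 1), Real.rpow_one] at h3
    rw [hRinv, ← inv_inv m]
    exact inv_anti₀ (inv_pos.mpr hmpos) h2
  have hRle1 : R ≤ 1 := le_trans hRle (min_le_right _ _)
  have hRler₀ : R ≤ r₀ := le_trans hRle (min_le_left _ _)
  set W : EuclideanSpace ℝ (Fin d) → ℝ := fun z => v ‖z‖ with hWdef
  have hW : ∀ z : EuclideanSpace ℝ (Fin d), z ≠ 0 → ‖z‖ ≤ R → -C * ‖z‖ ^ (-σ) ≤ W z := by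
    intro z hz hzR
    have h0 : 0 < ‖z‖ := norm_pos_iff.mpr hz
    have h1 : ‖z‖ ≤ 1 := le_trans hzR hRle1
    have h2 := hvlow ‖z‖ ⟨h0, le_trans hzR hRler₀⟩
    have h3 : ‖z‖ ^ (-s) ≤ ‖z‖ ^ (-σ) :=
      Real.rpow_le_rpow_of_exponent_ge h0 h1 (neg_le_neg (le_max_left _ _))
    have h4 : -C * ‖z‖ ^ (-σ) ≤ -C * ‖z‖ ^ (-s) := by nlinarith
    exact le_trans h4 h2
  have heq : ∀ z : EuclideanSpace ℝ (Fin d), z ≠ 0 → euclLaplacian u z = (W z - lam) * u z := by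
    intro z hz
    have h := hpde z hz
    rw [sub_mul]
    simp only [hWdef]
    linarith
  have hsubcl : ∀ z ∈ closure Ω, ‖z‖ ≤ R := by
    intro z hz
    have h1 : Ω ⊆ Metric.ball 0 R := by
      have := hsubball
      rwa [one_mul] at this
    have h2 : closure Ω ⊆ Metric.closedBall (0 : EuclideanSpace ℝ (Fin d)) R := by
      rw [← closure_ball (0 : EuclideanSpace ℝ (Fin d)) (ne_of_gt hRpos)]
      exact closure_mono h1
    have := h2 hz
    rwa [Metric.mem_closedBall, dist_zero_right] at this
  have husign : (∀ z ∈ Ω, 0 < u z) ∨ (∀ z ∈ Ω, u z < 0) := by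
    by_contra hcon
    push_neg at hcon
    obtain ⟨⟨a, ha, ha'⟩, b, hb, hb'⟩ := hcon
    have ha0 : u a < 0 := lt_of_le_of_ne ha' (hΩsubS ha)
    have hb0 : 0 < u b := lt_of_le_of_ne hb' (Ne.symm (hΩsubS hb))
    have hIVT := hΩconn.intermediate_value ha hb hScont.continuousOn
    obtain ⟨z, hzΩ, hz0⟩ := hIVT ⟨le_of_lt ha0, le_of_lt hb0⟩
    exact hΩsubS hzΩ hz0
  have hineq : 1 ≤ lam * R^2 / d + C/((2-σ)*((d:ℝ)-σ)) * (R^2) ^ ((2-σ)/2) := by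
    rcases husign with hposs | hnegs
    · exact aux_main hd hσ1 hσ2 hC hlampos hRpos hRle1 hW hu heq hΩopen hΩne hposs hbd hsubcl
    · have hu' : ContDiff ℝ 2 (fun z => -u z) := hu.neg
      have heq' : ∀ z : EuclideanSpace ℝ (Fin d), z ≠ 0 →
          euclLaplacian (fun z' => -u z') z = (W z - lam) * (-u z) := by
        intro z hz
        rw [euclLaplacian_neg, heq z hz]
        ring
      have hbd' : ∀ y ∈ closure Ω, y ∉ Ω → -u y = 0 := by
        intro y hy hyΩ
        rw [hbd y hy hyΩ]; ring
      have hposs' : ∀ z ∈ Ω, 0 < -u z := fun z hz => neg_pos.mpr (hnegs z hz)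
      exact aux_main hd hσ1 hσ2 hC hlampos hRpos hRle1 hW hu' heq' hΩopen hΩne hposs' hbd' hsubcl
  -- numeric contradiction
  have hRsq : R^2 = lam⁻¹ := by
    rw [hRdef, ← Real.rpow_natCast (lam ^ (-(1:ℝ)/2)) 2, ← Real.rpow_mul (le_of_lt hlampos),
      (by norm_num : (-(1:ℝ)/2) * ((2:ℕ):ℝ) = -1), Real.rpow_neg_one]
  have h1d : lam * R^2 / d ≤ 1/3 := by
    rw [hRsq, mul_inv_cancel₀ (ne_of_gt hlampos)]
    rw [div_le_div_iff₀ (by linarith) (by norm_num)]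
    linarith
  have hterm2 : C/((2-σ)*((d:ℝ)-σ)) * (R^2) ^ ((2-σ)/2) ≤ 1/2 := by
    have hexp : (R^2 : ℝ) ^ ((2-σ)/2) = (lam ^ ((2-σ)/2))⁻¹ := by
      rw [hRsq, ← Real.rpow_neg_one lam, ← Real.rpow_mul (le_of_lt hlampos),
        ← Real.rpow_neg (le_of_lt hlampos)]
      norm_num
    have h2 : (max 1 (2*C₁)) ^ ((2:ℝ)/(2-σ)) ≤ lam := le_trans (le_max_right _ _) hlam
    have hmaxnn : (0:ℝ) ≤ max 1 (2*C₁) := le_trans zero_le_one (le_max_left _ _)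
    have h2σ : (2:ℝ) - σ ≠ 0 := by linarith
    have h3 : 2*C₁ ≤ lam ^ ((2-σ)/2) := by
      have h4 : ((max 1 (2*C₁)) ^ ((2:ℝ)/(2-σ))) ^ ((2-σ)/2) ≤ lam ^ ((2-σ)/2) :=
        Real.rpow_le_rpow (Real.rpow_nonneg hmaxnn _) h2 (by linarith)
      have hexp1 : (2:ℝ)/(2-σ) * ((2-σ)/2) = 1 := by field_simp
      rw [← Real.rpow_mul hmaxnn, hexp1, Real.rpow_one] at h4
      exact le_trans (le_max_right _ _) h4
    have hrp : 0 < lam ^ ((2-σ)/2) := Real.rpow_pos_of_pos hlampos _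
    have h5 : (lam ^ ((2-σ)/2))⁻¹ ≤ (2*C₁)⁻¹ :=
      inv_anti₀ (by linarith) h3
    calc C/((2-σ)*((d:ℝ)-σ)) * (R^2) ^ ((2-σ)/2)
        = C₁ * (lam ^ ((2-σ)/2))⁻¹ := by rw [hexp, hC₁, hKdef]
      _ ≤ C₁ * (2*C₁)⁻¹ := by
          apply mul_le_mul_of_nonneg_left h5 (le_of_lt hC₁pos)
      _ = 1/2 := by field_simp
  linarith
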